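/- Let K ≥ 1, let r_min ≥ 0, set θ = 2^{r_min} − 1, let Ψ > 0, and let λ_1, …, λ_K be positive reals. Define ρ_{1,min}, …, ρ_{K,min} recursively by ρ_{i,min} = θ·(Σ_{j=1}^{i-1} ρ_{j,min} + Ψ/λ_i). Then the total minimum transmit SNR satisfies Σ_{i=1}^{K} ρ_{i,min} = (2^{r_min} − 1) · Σ_{i=0}^{K-1} 2^{i·r_min} · Ψ/λ_{K-i}. -/

import Mathlib

/-- Proposition 1 (first part): the total minimum transmit SNR satisfies
`∑_{i=1}^K ρmin i = (2^rmin − 1) ∑_{i=0}^{K-1} 2^(i rmin) Ψ/λ_{K-i}`. -/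
theorem stmt_1 (K : ℕ) (hK : 1 ≤ K) (rmin : ℝ) (hr : 0 ≤ rmin)
    (Ψ : ℝ) (hΨ : 0 < Ψ) (lam : ℕ → ℝ) (hlam : ∀ i, 1 ≤ i → i ≤ K → 0 < lam i)
    (ρmin : ℕ → ℝ)
    (hρ : ∀ i, 1 ≤ i → i ≤ K →
      ρmin i = ((2:ℝ) ^ rmin - 1) * (∑ j ∈ Finset.Icc 1 (i - 1), ρmin j + Ψ / lam i)) :
    ∑ i ∈ Finset.Icc 1 K, ρmin i
      = ((2:ℝ) ^ rmin - 1) *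
        ∑ i ∈ Finset.range K, (2:ℝ) ^ ((i : ℝ) * rmin) * (Ψ / lam (K - i)) := by
  suffices h : ∀ n, n ≤ K → ∑ i ∈ Finset.Icc 1 n, ρmin i
      = ((2:ℝ) ^ rmin - 1) *
        ∑ i ∈ Finset.range n, (2:ℝ) ^ ((i : ℝ) * rmin) * (Ψ / lam (n - i)) from
    h K le_rfl
  intro n
  induction n with
  | zero => intro _; simp
  | succ n ih =>
    intro hn
    have hn' : n ≤ K := Nat.le_of_succ_le hn
    rw [Finset.sum_Icc_succ_top (by omega : 1 ≤ n + 1), ih hn',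
      hρ (n + 1) (by omega) hn, Nat.add_sub_cancel,
      Finset.sum_range_succ']
    have hstep : ∀ i ∈ Finset.range n,
        (2:ℝ) ^ (((i + 1 : ℕ) : ℝ) * rmin) * (Ψ / lam (n + 1 - (i + 1)))
          = (2:ℝ) ^ rmin * ((2:ℝ) ^ ((i : ℝ) * rmin) * (Ψ / lam (n - i))) := by
      intro i _
      have : (2:ℝ) ^ (((i + 1 : ℕ) : ℝ) * rmin)
          = (2:ℝ) ^ rmin * (2:ℝ) ^ ((i : ℝ) * rmin) := by
        rw [← Real.rpow_add (by norm_num)]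
        push_cast
        ring_nf
      have hidx : n + 1 - (i + 1) = n - i := by omega
      rw [this, hidx]
      ring
    rw [Finset.sum_congr rfl hstep, ih hn', ← Finset.mul_sum]
    simp only [Nat.cast_zero, zero_mul, Real.rpow_zero, Nat.sub_zero, one_mul]
    ring
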